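/- Let k be a field of characteristic different from 2 and u, v ∈ k. Set f₀ = (X₀−vX₂)², f₁ = (X₀−vX₂)X₁, f₂ = X₁², f₃ = vX₁X₂ + (X₀+vX₂)X₃ (the defining forms of the 2-isogeny ψ: Q₁ → Q₂), and set g₀ = (X₀ − vX₂)², g₁ = (X₀ − vX₂ + X₁)², g₂ = X₁², g₃ = (X₀ + X₁ + vX₂ + 2X₃)². Then for every (X₀,X₁,X₂,X₃) ∈ k⁴ satisfying the equations of Q₁: f₀ = g₀, f₂ = g₂, 2f₁ = g₁ − g₀ − g₂, and 4f₃ = 2g₀ − 3g₁ + (2 − 4u − 4v)g₂ + g₃. Hence the span of the f's equals the span of the squares g₀, g₁, g₂, g₃ modulo the relations of Q₁, so ψ can be evaluated using only 4 squarings. -/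
import Mathlib


/-- In characteristic different from 2, the defining forms
`(f₀,f₁,f₂,f₃)` of the 2-isogeny `ψ : Q₁ → Q₂` are spanned, modulo the
relations of `Q₁`, by the four squares `g₀, g₁, g₂, g₃`: explicitly
`f₀ = g₀`, `f₂ = g₂`, `2f₁ = g₁ − g₀ − g₂` and
`4f₃ = 2g₀ − 3g₁ + (2−4u−4v)g₂ + g₃` hold on `Q₁`. -/
theorem psi_square_forms_char_ne_two {k : Type*} [Field k]
    (hchar : (2 : k) ≠ 0) (u v : k) (X₀ X₁ X₂ X₃ : k)
    (h1 : X₃ ^ 2 + X₁ * X₃ = (X₀ + u * X₁ - v * X₂) * X₁)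
    (h2 : X₁ ^ 2 = X₀ * X₂) :
    (let f₀ := (X₀ - v * X₂) ^ 2
     let f₁ := (X₀ - v * X₂) * X₁
     let f₂ := X₁ ^ 2
     let f₃ := v * X₁ * X₂ + (X₀ + v * X₂) * X₃
     let g₀ := (X₀ - v * X₂) ^ 2
     let g₁ := (X₀ - v * X₂ + X₁) ^ 2
     let g₂ := X₁ ^ 2
     let g₃ := (X₀ + X₁ + v * X₂ + 2 * X₃) ^ 2
     f₀ = g₀ ∧ f₂ = g₂ ∧ 2 * f₁ = g₁ - g₀ - g₂ ∧
       4 * f₃ = 2 * g₀ - 3 * g₁ + (2 - 4 * u - 4 * v) * g₂ + g₃) := by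
  refine ⟨rfl, rfl, by ring, ?_⟩
  linear_combination (-4 : k) * h1 + (4 * v : k) * h2
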